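/- Suppose the Fréchet derivative f' of f is uniformly continuous on C. Then for every σ ∈ (1,2], every x, s ∈ C and every γ ∈ (0,1], with y = x + γ(s − x), one has (σ/γ^σ)·(f(y) − f(x) − ⟨f'(x), y − x⟩) ≤ sup_{0 < γ' ≤ 1} (σ/γ'^σ)·∫_0^{γ'·diam(C)} ω(f', τ) dτ, where ω(f', τ) := sup{‖f'(x_1) − f'(x_2)‖ : x_1, x_2 ∈ C, ‖x_1 − x_2‖ ≤ τ} is the modulus of continuity of f' on C and diam(C) = sup{‖u − v‖ : u, v ∈ C}. In other words, the curvature constant of order σ of f over C, C_f^{(σ)} := sup{(σ/γ^σ)·(f(x + γ(s−x)) − f(x) − ⟨f'(x), γ(s−x)⟩) : x, s ∈ C, γ ∈ (0,1]}, satisfies C_f^{(σ)} ≤ sup_{0 < γ ≤ 1} (σ/γ^σ)·∫_0^{γ·diam(C)} ω(f', τ) dτ. -/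

import Mathlib

open Set intervalIntegral

private lemma chain_bound {X : Type*} [NormedAddCommGroup X] [NormedSpace ℝ X]
    {C : Set X} (hCcv : Convex ℝ C) {g : X → X →L[ℝ] ℝ} {δ : ℝ} (hδ : 0 < δ)
    (h1 : ∀ u ∈ C, ∀ v ∈ C, ‖u - v‖ ≤ δ → ‖g u - g v‖ ≤ 1) :
    ∀ n : ℕ, ∀ u ∈ C, ∀ v ∈ C, ‖u - v‖ ≤ n * δ → ‖g u - g v‖ ≤ n := by
  intro n
  induction n with
  | zero =>
    intro u hu v hv h
    simp only [Nat.cast_zero, zero_mul] at h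
    have huv : u = v := by
      have h0 : ‖u - v‖ = 0 := le_antisymm h (norm_nonneg _)
      rwa [norm_sub_eq_zero_iff] at h0
    simp [huv]
  | succ n ih =>
    intro u hu v hv h
    by_cases hle : ‖u - v‖ ≤ δ
    · have h0 := h1 u hu v hv hle
      have h2 : (1 : ℝ) ≤ ((n + 1 : ℕ) : ℝ) := by push_cast; linarith
      linarith
    · push_neg at hle
      have hnz : ‖u - v‖ ≠ 0 := by linarith
      set t : ℝ := δ / ‖u - v‖ with ht
      have ht0 : 0 ≤ t := div_nonneg hδ.le (norm_nonneg _)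
      have ht1 : t ≤ 1 := (div_le_one (by linarith)).2 hle.le
      have hwC : v + t • (u - v) ∈ C := hCcv.add_smul_sub_mem hv hu ⟨ht0, ht1⟩
      set w := v + t • (u - v) with hwdef
      have hwv : ‖w - v‖ ≤ δ := by
        have : w - v = t • (u - v) := by simp [hwdef]
        rw [this, norm_smul, Real.norm_eq_abs, abs_of_nonneg ht0, ht,
          div_mul_cancel₀ _ hnz]
      have huw : ‖u - w‖ ≤ n * δ := by
        have h3 : u - w = (1 - t) • (u - v) := by
          rw [hwdef]; rw [sub_smul, one_smul]; abel
        rw [h3, norm_smul, Real.norm_eq_abs, abs_of_nonneg (by linarith), sub_mul,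
          one_mul, ht, div_mul_cancel₀ _ hnz]
        push_cast at h
        linarith
      calc ‖g u - g v‖ ≤ ‖g u - g w‖ + ‖g w - g v‖ := norm_sub_le_norm_sub_add_norm_sub _ _ _
        _ ≤ n + 1 := add_le_add (ih u hu w hwC huw) (h1 w hwC v hv hwv)
        _ = ((n + 1 : ℕ) : ℝ) := by push_cast; ring

theorem stmt_10
    {X : Type*} [NormedAddCommGroup X] [NormedSpace ℝ X] [CompleteSpace X]
    (C : Set X) (hCne : C.Nonempty) (hCcl : IsClosed C)
    (hCbd : Bornology.IsBounded C) (hCcv : Convex ℝ C)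
    (f : X → ℝ) (f' : X → X →L[ℝ] ℝ)
    (hfderiv : ∀ x : X, HasFDerivAt f (f' x) x)
    (hfUC : UniformContinuousOn f' C)
    (ω : ℝ → ℝ)
    (hω : ∀ τ : ℝ, ω τ =
      sSup {d : ℝ | ∃ x₁ ∈ C, ∃ x₂ ∈ C, ‖x₁ - x₂‖ ≤ τ ∧ d = ‖f' x₁ - f' x₂‖})
    (σ : ℝ) (hσ : σ ∈ Set.Ioc (1 : ℝ) 2)
    (M : ℝ)
    (hM : ∀ γ' ∈ Set.Ioc (0 : ℝ) 1,
      (σ / γ' ^ σ) * ∫ τ in (0 : ℝ)..(γ' * Metric.diam C), ω τ ≤ M) :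
    ∀ x ∈ C, ∀ s ∈ C, ∀ γ ∈ Set.Ioc (0 : ℝ) 1,
      (σ / γ ^ σ) *
          (f (x + γ • (s - x)) - f x - f' x ((x + γ • (s - x)) - x)) ≤ M := by
  intro x hx s hs γ hγ
  obtain ⟨hγ0, hγ1⟩ := hγ
  -- a uniform bound on ‖f' u - f' v‖ over C
  obtain ⟨δ, hδ0, hδ⟩ := (Metric.uniformContinuousOn_iff).1 hfUC 1 one_pos
  set K : ℝ := (⌈Metric.diam C / (δ / 2)⌉₊ : ℝ) with hK
  have hKbd : ∀ u ∈ C, ∀ v ∈ C, ‖f' u - f' v‖ ≤ K := by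
    intro u hu v hv
    refine chain_bound hCcv (half_pos hδ0) ?_ _ u hu v hv ?_
    · intro a ha b hb hab
      have h2 : dist a b < δ := by
        rw [dist_eq_norm]; linarith [half_lt_self hδ0]
      have := hδ a ha b hb h2
      rw [dist_eq_norm] at this; linarith
    · have h1 : ‖u - v‖ ≤ Metric.diam C := by
        rw [← dist_eq_norm]; exact Metric.dist_le_diam_of_mem hCbd hu hv
      have h2 : Metric.diam C ≤ (⌈Metric.diam C / (δ / 2)⌉₊ : ℝ) * (δ / 2) := by
        rw [← div_le_iff₀ (half_pos hδ0)]
        exact Nat.le_ceil _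
      linarith
  have hBdd : ∀ τ : ℝ,
      BddAbove {d : ℝ | ∃ x₁ ∈ C, ∃ x₂ ∈ C, ‖x₁ - x₂‖ ≤ τ ∧ d = ‖f' x₁ - f' x₂‖} := by
    intro τ
    exact ⟨K, fun d ⟨x₁, h₁, x₂, h₂, _, hd⟩ => hd ▸ hKbd x₁ h₁ x₂ h₂⟩
  have hωle : ∀ x₁ ∈ C, ∀ x₂ ∈ C, ∀ τ : ℝ, ‖x₁ - x₂‖ ≤ τ → ‖f' x₁ - f' x₂‖ ≤ ω τ := by
    intro x₁ h₁ x₂ h₂ τ hτ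
    rw [hω]; exact le_csSup (hBdd τ) ⟨x₁, h₁, x₂, h₂, hτ, rfl⟩
  have hωnn : ∀ τ : ℝ, 0 ≤ ω τ := by
    intro τ
    rcases eq_empty_or_nonempty
      {d : ℝ | ∃ x₁ ∈ C, ∃ x₂ ∈ C, ‖x₁ - x₂‖ ≤ τ ∧ d = ‖f' x₁ - f' x₂‖} with h | h
    · rw [hω, h, Real.sSup_empty]
    · obtain ⟨d, hd⟩ := h
      obtain ⟨x₁, h₁, x₂, h₂, hτ, rfl⟩ := hd
      exact le_trans (norm_nonneg _) (hωle x₁ h₁ x₂ h₂ τ hτ)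
  have hωmono : Monotone ω := by
    intro a b hab
    rcases eq_empty_or_nonempty
      {d : ℝ | ∃ x₁ ∈ C, ∃ x₂ ∈ C, ‖x₁ - x₂‖ ≤ a ∧ d = ‖f' x₁ - f' x₂‖} with h | h
    · rw [hω a, h, Real.sSup_empty]; exact hωnn b
    · rw [hω a, hω b]
      refine csSup_le_csSup (hBdd b) h ?_
      rintro d ⟨x₁, h₁, x₂, h₂, hτ, hd⟩
      exact ⟨x₁, h₁, x₂, h₂, hτ.trans hab, hd⟩
  -- geometry
  set y := x + γ • (s - x) with hy
  have hyC : y ∈ C := hCcv.add_smul_sub_mem hx hs ⟨hγ0.le, hγ1⟩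
  set L : ℝ := ‖y - x‖ with hLdef
  have hL0 : 0 ≤ L := norm_nonneg _
  set D : ℝ := γ * Metric.diam C with hD
  have hLD : L ≤ D := by
    have h1 : y - x = γ • (s - x) := by rw [hy]; abel
    rw [hLdef, h1, norm_smul, Real.norm_eq_abs, abs_of_pos hγ0, hD]
    refine mul_le_mul_of_nonneg_left ?_ hγ0.le
    rw [← dist_eq_norm]; exact Metric.dist_le_diam_of_mem hCbd hs hx
  have hpath : ∀ t ∈ Icc (0 : ℝ) 1, x + t • (y - x) ∈ C := fun t ht =>
    hCcv.add_smul_sub_mem hx hyC ht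
  -- FTC along the segment
  have hg : ∀ t : ℝ, HasDerivAt (fun t : ℝ => f (x + t • (y - x)))
      (f' (x + t • (y - x)) (y - x)) t := by
    intro t
    have h1 : HasDerivAt (fun t : ℝ => x + t • (y - x)) (y - x) t := by
      simpa using ((hasDerivAt_id t).smul_const (y - x)).const_add x
    exact (hfderiv (x + t • (y - x))).comp_hasDerivAt t h1
  have hf'cont : ContinuousOn (fun t : ℝ => f' (x + t • (y - x))) (Icc 0 1) := by
    refine hfUC.continuousOn.comp ?_ hpath
    exact (continuous_const.add (continuous_id.smul continuous_const)).continuousOn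
  have hint1 : IntervalIntegrable (fun t : ℝ => f' (x + t • (y - x)) (y - x))
      MeasureTheory.volume 0 1 := by
    apply ContinuousOn.intervalIntegrable
    rw [uIcc_of_le zero_le_one]
    exact hf'cont.clm_apply continuousOn_const
  have hFTC : ∫ t in (0 : ℝ)..1, f' (x + t • (y - x)) (y - x) = f y - f x := by
    have := intervalIntegral.integral_eq_sub_of_hasDerivAt
      (f := fun t : ℝ => f (x + t • (y - x))) (fun t _ => hg t) hint1
    simpa using this
  have key : f y - f x - f' x (y - x) =
      ∫ t in (0 : ℝ)..1, (f' (x + t • (y - x)) (y - x) - f' x (y - x)) := by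
    rw [intervalIntegral.integral_sub hint1 intervalIntegrable_const, hFTC,
      intervalIntegral.integral_const]
    simp
  -- pointwise bound
  have hbmono : Monotone (fun t : ℝ => ω (t * L) * L) := by
    intro a b hab
    exact mul_le_mul_of_nonneg_right (hωmono (mul_le_mul_of_nonneg_right hab hL0)) hL0
  have hint2 : IntervalIntegrable (fun t : ℝ => ω (t * L) * L)
      MeasureTheory.volume 0 1 := (hbmono.monotoneOn _).intervalIntegrable
  have hpt : ∀ t ∈ Icc (0 : ℝ) 1,
      f' (x + t • (y - x)) (y - x) - f' x (y - x) ≤ ω (t * L) * L := by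
    intro t ht
    have h1 : f' (x + t • (y - x)) (y - x) - f' x (y - x)
        = (f' (x + t • (y - x)) - f' x) (y - x) := by simp
    have h2 : ‖(x + t • (y - x)) - x‖ ≤ t * L := by
      have : (x + t • (y - x)) - x = t • (y - x) := by abel
      rw [this, norm_smul, Real.norm_eq_abs, abs_of_nonneg ht.1, hLdef]
    calc f' (x + t • (y - x)) (y - x) - f' x (y - x)
        = (f' (x + t • (y - x)) - f' x) (y - x) := h1
      _ ≤ ‖(f' (x + t • (y - x)) - f' x) (y - x)‖ := le_abs_self _
      _ ≤ ‖f' (x + t • (y - x)) - f' x‖ * ‖y - x‖ :=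
          (f' (x + t • (y - x)) - f' x).le_opNorm (y - x)
      _ ≤ ω (t * L) * L := by
          refine mul_le_mul_of_nonneg_right ?_ hL0
          exact hωle _ (hpath t ht) x hx (t * L) h2
  have step1 : (∫ t in (0 : ℝ)..1, (f' (x + t • (y - x)) (y - x) - f' x (y - x)))
      ≤ ∫ t in (0 : ℝ)..1, ω (t * L) * L :=
    intervalIntegral.integral_mono_on zero_le_one
      (hint1.sub intervalIntegrable_const) hint2 hpt
  have step2 : (∫ t in (0 : ℝ)..1, ω (t * L) * L) = ∫ τ in (0 : ℝ)..L, ω τ := by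
    rw [intervalIntegral.integral_mul_const, mul_comm, ← smul_eq_mul]
    simpa using intervalIntegral.smul_integral_comp_mul_right ω L
  have hi1 : IntervalIntegrable ω MeasureTheory.volume 0 L :=
    (hωmono.monotoneOn _).intervalIntegrable
  have hi2 : IntervalIntegrable ω MeasureTheory.volume L D :=
    (hωmono.monotoneOn _).intervalIntegrable
  have step3 : (∫ τ in (0 : ℝ)..L, ω τ) ≤ ∫ τ in (0 : ℝ)..D, ω τ := by
    have hadd := intervalIntegral.integral_add_adjacent_intervals hi1 hi2
    have h4 : 0 ≤ ∫ τ in L..D, ω τ :=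
      intervalIntegral.integral_nonneg hLD (fun u _ => hωnn u)
    linarith
  have keyineq : f y - f x - f' x (y - x) ≤ ∫ τ in (0 : ℝ)..D, ω τ := by
    rw [key]; calc (∫ t in (0 : ℝ)..1, (f' (x + t • (y - x)) (y - x) - f' x (y - x)))
        ≤ ∫ t in (0 : ℝ)..1, ω (t * L) * L := step1
      _ = ∫ τ in (0 : ℝ)..L, ω τ := step2
      _ ≤ ∫ τ in (0 : ℝ)..D, ω τ := step3
  have hpos : (0 : ℝ) ≤ σ / γ ^ σ :=
    le_of_lt (div_pos (lt_trans one_pos hσ.1) (Real.rpow_pos_of_pos hγ0 σ))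
  calc (σ / γ ^ σ) * (f (x + γ • (s - x)) - f x - f' x ((x + γ • (s - x)) - x))
      = (σ / γ ^ σ) * (f y - f x - f' x (y - x)) := by rw [hy]
    _ ≤ (σ / γ ^ σ) * ∫ τ in (0 : ℝ)..D, ω τ := mul_le_mul_of_nonneg_left keyineq hpos
    _ ≤ M := hM γ ⟨hγ0, hγ1⟩
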